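/- Let $X$ be a Banach space, $f : [a,b] \to X$ with derivative $f'$ integrable on $[a,b]$ (Bochner sense), and fix $x \in [a,b]$. Then $f(x) = \frac{1}{b-a}\int_a^b f(t)\,dt + \frac{1}{b-a}\int_a^b k(x,t) f'(t)\,dt$, where $k(x,t) = t-a$ for $a \le t \le x$ and $k(x,t) = t-b$ for $x < t \le b$. -/

import Mathlib

open MeasureTheory intervalIntegral

theorem stmt3 {X : Type*} [NormedAddCommGroup X] [NormedSpace ℝ X] [CompleteSpace X]
    {a b : ℝ} (hab : a < b) {f f' : ℝ → X}
    (hderiv : ∀ t ∈ Set.Icc a b, HasDerivAt f (f' t) t)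
    (hint : IntervalIntegrable f' volume a b) {x : ℝ} (hx : x ∈ Set.Icc a b) :
    f x = (b - a)⁻¹ • (∫ t in a..b, f t) +
      (b - a)⁻¹ • (∫ t in a..b, (if t ≤ x then t - a else t - b) • f' t) := by
  obtain ⟨hax, hxb⟩ := hx
  have hab' : a ≤ b := hab.le
  have hba : b - a ≠ 0 := sub_ne_zero.mpr hab.ne'
  have hfc : ContinuousOn f (Set.Icc a b) :=
    fun t ht => (hderiv t ht).continuousAt.continuousWithinAt
  have hint' : IntegrableOn f' (Set.Icc a b) volume := by
    rw [integrableOn_Icc_iff_integrableOn_Ioc]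
    simpa [intervalIntegrable_iff, Set.uIoc_of_le hab'] using hint
  have key : ∀ c d e : ℝ, c ≤ d → Set.Icc c d ⊆ Set.Icc a b →
      IntervalIntegrable (fun t => (t - e) • f' t) volume c d := by
    intro c d e hcd hsub
    rw [intervalIntegrable_iff, Set.uIoc_of_le hcd]
    have : IntegrableOn (fun t => (t - e) • f' t) (Set.Icc a b) volume :=
      hint'.continuousOn_smul ((continuous_id.sub continuous_const).continuousOn) isCompact_Icc
    exact this.mono_set (Set.Ioc_subset_Icc_self.trans hsub)
  have hfint : ∀ c d : ℝ, c ≤ d → Set.Icc c d ⊆ Set.Icc a b →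
      IntervalIntegrable f volume c d := by
    intro c d hcd hsub
    exact (hfc.mono hsub).intervalIntegrable_of_Icc hcd
  have hsub1 : Set.Icc a x ⊆ Set.Icc a b := Set.Icc_subset_Icc le_rfl hxb
  have hsub2 : Set.Icc x b ⊆ Set.Icc a b := Set.Icc_subset_Icc hax le_rfl
  have ftc : ∀ c d e : ℝ, c ≤ d → Set.Icc c d ⊆ Set.Icc a b →
      ∫ t in c..d, (f t + (t - e) • f' t) = (d - e) • f d - (c - e) • f c := by
    intro c d e hcd hsub
    have hd : ∀ t ∈ Set.uIcc c d,
        HasDerivAt (fun s => (s - e) • f s) (f t + (t - e) • f' t) t := by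
      intro t ht
      rw [Set.uIcc_of_le hcd] at ht
      have h1 : HasDerivAt (fun s : ℝ => s - e) 1 t := (hasDerivAt_id t).sub_const e
      have := h1.smul (hderiv t (hsub ht))
      rw [one_smul, add_comm] at this
      exact this
    exact integral_eq_sub_of_hasDerivAt hd
      ((hfint c d hcd hsub).add (key c d e hcd hsub))
  have eq1 : (∫ t in a..x, (t - a) • f' t) = (x - a) • f x - ∫ t in a..x, f t := by
    have h := ftc a x a hax hsub1
    rw [integral_add (hfint a x hax hsub1) (key a x a hax hsub1)] at h
    have h2 := eq_sub_of_add_eq' h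
    rw [h2]; module
  have eq2 : (∫ t in x..b, (t - b) • f' t) = (b - x) • f x - ∫ t in x..b, f t := by
    have h := ftc x b b hxb hsub2
    rw [integral_add (hfint x b hxb hsub2) (key x b b hxb hsub2)] at h
    have h2 := eq_sub_of_add_eq' h
    rw [h2]; module
  -- split the kernel integral
  have hk1 : IntervalIntegrable (fun t => (if t ≤ x then t - a else t - b) • f' t) volume a x := by
    apply (key a x a hax hsub1).congr
    intro t ht
    rw [Set.uIoc_of_le hax] at ht
    simp [ht.2]
  have hk2 : IntervalIntegrable (fun t => (if t ≤ x then t - a else t - b) • f' t) volume x b := by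
    apply (key x b b hxb hsub2).congr
    intro t ht
    rw [Set.uIoc_of_le hxb] at ht
    simp [not_le.mpr ht.1]
  have hsplit : (∫ t in a..b, (if t ≤ x then t - a else t - b) • f' t) =
      (∫ t in a..x, (if t ≤ x then t - a else t - b) • f' t) +
      (∫ t in x..b, (if t ≤ x then t - a else t - b) • f' t) :=
    (integral_add_adjacent_intervals hk1 hk2).symm
  have hc1 : (∫ t in a..x, (if t ≤ x then t - a else t - b) • f' t) =
      ∫ t in a..x, (t - a) • f' t := by
    apply integral_congr
    intro t ht
    rw [Set.uIcc_of_le hax] at ht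
    simp [ht.2]
  have hc2 : (∫ t in x..b, (if t ≤ x then t - a else t - b) • f' t) =
      ∫ t in x..b, (t - b) • f' t := by
    rw [integral_of_le hxb, integral_of_le hxb]
    apply setIntegral_congr_fun measurableSet_Ioc
    intro t ht
    simp [not_le.mpr ht.1]
  have hfsplit : (∫ t in a..b, f t) = (∫ t in a..x, f t) + ∫ t in x..b, f t :=
    (integral_add_adjacent_intervals (hfint a x hax hsub1) (hfint x b hxb hsub2)).symm
  rw [hsplit, hc1, hc2, eq1, eq2, hfsplit]
  have : (x - a) • f x - (∫ t in a..x, f t) + ((b - x) • f x - ∫ t in x..b, f t) =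
      (b - a) • f x - ((∫ t in a..x, f t) + ∫ t in x..b, f t) := by module
  rw [this, smul_sub, smul_smul, inv_mul_cancel₀ hba, one_smul]
  abel
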